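/- Let τ > 0, σ² > 0, ρ > 0. The condition F(1/(1+σ²+ρ)) > 0, where F(t) = (1/τ)·[1 + 2σ² - 2(1+σ²)/(1 + exp(-2/τ + 2(1+σ²)t/τ))], is equivalent to τ > 2ρ / [(1+σ²+ρ)·log(1+2σ²)]. -/
import Mathlib


/-- With `F(t) = (1/τ)[1 + 2σ² - 2(1+σ²)/(1 + exp(-2/τ + 2(1+σ²)t/τ))]`, `τ > 0`,
`σ² > 0` (written `s`), `ρ > 0`:  `F(1/(1+σ²+ρ)) > 0` is equivalent to
`τ > 2ρ/((1+σ²+ρ)·log(1+2σ²))`. -/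
theorem stmt4 (τ s ρ : ℝ) (hτ : 0 < τ) (hs : 0 < s) (hρ : 0 < ρ) :
    0 < (1 / τ) * (1 + 2 * s - 2 * (1 + s) /
        (1 + Real.exp (-2 / τ + 2 * (1 + s) * (1 / (1 + s + ρ)) / τ))) ↔
      2 * ρ / ((1 + s + ρ) * Real.log (1 + 2 * s)) < τ := by
  have hA : (0:ℝ) < 1 + s + ρ := by linarith
  have hL : 0 < Real.log (1 + 2 * s) := Real.log_pos (by linarith)
  have hx : -2 / τ + 2 * (1 + s) * (1 / (1 + s + ρ)) / τ
      = -(2 * ρ / ((1 + s + ρ) * τ)) := by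
    field_simp
    ring
  rw [hx]
  set E := Real.exp (-(2 * ρ / ((1 + s + ρ) * τ))) with hE
  have hEpos : 0 < E := Real.exp_pos _
  have h1E : (0:ℝ) < 1 + E := by linarith
  have hτ' : 0 < 1 / τ := one_div_pos.mpr hτ
  have step1 : (0 < (1 / τ) * (1 + 2 * s - 2 * (1 + s) / (1 + E))) ↔
      1 / (1 + 2 * s) < E := by
    constructor
    · intro h
      have hC : 0 < 1 + 2 * s - 2 * (1 + s) / (1 + E) := by
        by_contra hc
        push_neg at hc
        nlinarith
      have h2 : 2 * (1 + s) / (1 + E) < 1 + 2 * s := by linarith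
      have h3 : 2 * (1 + s) < (1 + 2 * s) * (1 + E) := (div_lt_iff₀ h1E).mp h2
      rw [div_lt_iff₀ (by linarith : (0:ℝ) < 1 + 2 * s)]
      nlinarith
    · intro h
      rw [div_lt_iff₀ (by linarith : (0:ℝ) < 1 + 2 * s)] at h
      have h3 : 2 * (1 + s) < (1 + 2 * s) * (1 + E) := by nlinarith
      have h2 : 2 * (1 + s) / (1 + E) < 1 + 2 * s := (div_lt_iff₀ h1E).mpr h3
      have hC : 0 < 1 + 2 * s - 2 * (1 + s) / (1 + E) := by linarith
      positivity
  rw [step1, hE]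
  have h14 : 1 / (1 + 2 * s) = Real.exp (-Real.log (1 + 2 * s)) := by
    rw [Real.exp_neg, Real.exp_log (by linarith : (0:ℝ) < 1 + 2 * s), one_div]
  rw [h14, Real.exp_lt_exp, neg_lt_neg_iff,
    div_lt_iff₀ (by positivity : (0:ℝ) < (1 + s + ρ) * τ)]
  rw [div_lt_iff₀ (by positivity : (0:ℝ) < (1 + s + ρ) * Real.log (1 + 2 * s))]
  constructor <;> intro h <;> nlinarith
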